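/- Let η > 0 and f ∈ C²([0,η],ℝ) with η < 1/(2‖f'‖_∞ ‖f''‖_∞). Fix 0 ≤ a < b ≤ η, and suppose a ≤ x < y ≤ b are such that the segment [(x,f(x)),(y,f(y))] is orthogonal to the chord [(a,f(a)),(b,f(b))]. Then no such x, y exist; equivalently, any line orthogonal to the chord [(a,f(a)),(b,f(b))] that intersects it meets the portion of the graph of f over [a,b] in at most one point. -/

import Mathlib

noncomputable section
open Set

set_option maxHeartbeats 1000000 in
/-- if `η < 1/(2‖f'‖_∞‖f''‖_∞)`, then for `0 ≤ a < b ≤ η` there are no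
points `a ≤ x < y ≤ b` such that the segment `[(x,f x),(y,f y)]` is orthogonal to the
chord `[(a,f a),(b,f b)]`; equivalently, any line orthogonal to the chord meets the
graph of `f` over `[a,b]` in at most one point. -/
theorem stmt8 (η a b : ℝ) (f : ℝ → ℝ) (M1 M2 : ℝ)
    (hη0 : 0 < η)
    (hf : ContDiff ℝ 2 f)
    (hM1 : M1 = sSup ((fun x => |deriv f x|) '' Icc (0:ℝ) η))
    (hM2 : M2 = sSup ((fun x => |deriv (deriv f) x|) '' Icc (0:ℝ) η))
    (hη : η < 1 / (2 * M1 * M2))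
    (ha : 0 ≤ a) (hab : a < b) (hb : b ≤ η) :
    ¬ ∃ x y : ℝ, a ≤ x ∧ x < y ∧ y ≤ b ∧
      (y - x) * (b - a) + (f y - f x) * (f b - f a) = 0 := by
  rintro ⟨x, y, hax, hxy, hyb, heq⟩
  have hf1 : ContDiff ℝ 1 (deriv f) := by
    have := (contDiff_succ_iff_deriv.mp (show ContDiff ℝ (1 + 1) f by norm_num [hf])).2
    exact this.2
  have hdf : Differentiable ℝ f := hf.differentiable (by norm_num)
  have hdf' : Differentiable ℝ (deriv f) := hf1.differentiable (by norm_num)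
  have hcd' : Continuous (deriv f) := hdf'.continuous
  have hcd'' : Continuous (deriv (deriv f)) := hf1.continuous_deriv le_rfl
  -- sup bounds
  have hBd1 : BddAbove ((fun x => |deriv f x|) '' Icc (0:ℝ) η) :=
    (isCompact_Icc.image hcd'.abs).bddAbove
  have hBd2 : BddAbove ((fun x => |deriv (deriv f) x|) '' Icc (0:ℝ) η) :=
    (isCompact_Icc.image hcd''.abs).bddAbove
  have hM1b : ∀ t ∈ Icc (0:ℝ) η, |deriv f t| ≤ M1 := fun t ht => by
    rw [hM1]; exact le_csSup hBd1 (mem_image_of_mem _ ht)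
  have hM2b : ∀ t ∈ Icc (0:ℝ) η, |deriv (deriv f) t| ≤ M2 := fun t ht => by
    rw [hM2]; exact le_csSup hBd2 (mem_image_of_mem _ ht)
  have h0 : (0:ℝ) ∈ Icc (0:ℝ) η := ⟨le_rfl, hη0.le⟩
  have hM1nn : 0 ≤ M1 := le_trans (abs_nonneg _) (hM1b 0 h0)
  have hM2nn : 0 ≤ M2 := le_trans (abs_nonneg _) (hM2b 0 h0)
  -- M1, M2 positive (else 1/(2 M1 M2) = 0 ≤ 0 < η contradiction)
  have hM1M2 : 0 < M1 * M2 := by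
    rcases lt_or_eq_of_le (mul_nonneg hM1nn hM2nn) with h | h
    · exact h
    · exfalso
      have h2 : (2:ℝ) * M1 * M2 = 2 * (M1 * M2) := by ring
      rw [h2, ← h] at hη
      simp at hη
      linarith
  -- MVT on [x,y] and [a,b]
  obtain ⟨c, hc, hc'⟩ := exists_deriv_eq_slope f hxy (hdf.continuous.continuousOn)
    (hdf.differentiableOn)
  obtain ⟨d, hd, hd'⟩ := exists_deriv_eq_slope f hab (hdf.continuous.continuousOn)
    (hdf.differentiableOn)
  set p := deriv f c with hp
  set q := deriv f d with hq
  have hxy' : y - x ≠ 0 := by linarith [hxy]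
  have hab' : b - a ≠ 0 := by linarith [hab]
  have hfy : f y - f x = p * (y - x) := by
    field_simp at hc'; linarith [hc']
  have hfb : f b - f a = q * (b - a) := by
    field_simp at hd'; linarith [hd']
  have hpq : p * q = -1 := by
    rw [hfy, hfb] at heq
    have h1 : (y - x) * (b - a) * (1 + p * q) = 0 := by ring_nf; ring_nf at heq; linarith
    have h2 : (y - x) * (b - a) ≠ 0 := mul_ne_zero hxy' hab'
    have := (mul_eq_zero.mp h1).resolve_left h2
    linarith
  -- c, d ∈ Icc 0 η
  have hsub : Ioo a b ⊆ Icc (0:ℝ) η := fun t ht => ⟨by linarith [ht.1], by linarith [ht.2]⟩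
  have hcm : c ∈ Icc (0:ℝ) η := hsub ⟨by linarith [hc.1, hax], by linarith [hc.2, hyb]⟩
  have hdm : d ∈ Icc (0:ℝ) η := hsub hd
  have hpb : |p| ≤ M1 := hM1b c hcm
  have hqb : |q| ≤ M1 := hM1b d hdm
  -- |p - q| ≤ M2 * |c - d| ≤ M2 * η via MVT on deriv f
  have hlip : |p - q| ≤ M2 * |c - d| := by
    have := Convex.norm_image_sub_le_of_norm_deriv_le
      (f := deriv f) (C := M2) (s := Icc (0:ℝ) η)
      (fun t _ => hdf'.differentiableAt)
      (fun t ht => by simpa [Real.norm_eq_abs] using hM2b t ht)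
      (convex_Icc _ _) hdm hcm
    simpa [Real.norm_eq_abs] using this
  have hcdle : |c - d| ≤ η := by
    rw [abs_le]
    constructor <;> [linarith [hcm.1, hcm.2, hdm.1, hdm.2]; linarith [hcm.1, hcm.2, hdm.1, hdm.2]]
  have hlip2 : |p - q| ≤ M2 * η := le_trans hlip (by
    exact mul_le_mul_of_nonneg_left hcdle hM2nn)
  -- final contradiction
  have hη2 : 2 * M1 * M2 * η < 1 := by
    have h2 : 0 < 2 * M1 * M2 := by linarith [hM1M2]
    rw [lt_div_iff₀ h2] at hη
    linarith [hη]
  have hp1 := abs_le.mp hpb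
  have hq1 := abs_le.mp hqb
  have hd1 := abs_le.mp hlip2
  have h4 : 2 ≤ M2 * η := by
    nlinarith [sq_nonneg (p + q), hd1.1, hd1.2, hpq, mul_nonneg hM2nn hη0.le]
  have h5 : 4 * M1 < 1 := by nlinarith [hM1nn]
  nlinarith [mul_nonneg (sub_nonneg.mpr hp1.2) (sub_nonneg.mpr hq1.2),
    mul_nonneg (by linarith [hp1.1] : (0:ℝ) ≤ M1 + p) (by linarith [hq1.1] : (0:ℝ) ≤ M1 + q),
    hpq, hM1nn]
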